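/- For any twice continuously differentiable function P on a neighborhood of the compact product of simplices D, there exists δ > 0 such that for all 0 < ε < δ, the MWU map T_ε (i.e., the Baum–Eagon map of Q = Σ_{ij}x_{ij} + εP) is a diffeomorphism of D (in projected coordinates) onto its image. -/

import Mathlib

/-- The product of `N` simplices with `M` coordinates each. -/
def simplexProd (N M : ℕ) : Set (Fin N × Fin M → ℝ) :=
  {x | (∀ a, 0 ≤ x a) ∧ ∀ i : Fin N, ∑ j : Fin M, x (i, j) = 1}

/-- The MWU map with stepsize `ε`, i.e. the Baum–Eagon map of `Q = ∑_{ij} x_{ij} + ε P`. -/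
noncomputable def mwuMap {N M : ℕ} (P : (Fin N × Fin M → ℝ) → ℝ) (ε : ℝ)
    (x : Fin N × Fin M → ℝ) : Fin N × Fin M → ℝ :=
  fun a =>
    x a * (1 + ε * fderiv ℝ P x (Pi.single a 1)) /
      (1 + ε * ∑ s : Fin M, x (a.1, s) * fderiv ℝ P x (Pi.single (a.1, s) 1))

/-- The "gradient coordinates" of `P`. -/
noncomputable def mwuGrad {N M : ℕ} (P : (Fin N × Fin M → ℝ) → ℝ)
    (x : Fin N × Fin M → ℝ) : Fin N × Fin M → ℝ :=
  fun a => fderiv ℝ P x (Pi.single a 1)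

/-- Denominator of the MWU map, as a function of `(ε, x)`. -/
noncomputable def mwuDen {N M : ℕ} (P : (Fin N × Fin M → ℝ) → ℝ)
    (p : ℝ × (Fin N × Fin M → ℝ)) (i : Fin N) : ℝ :=
  1 + p.1 * ∑ s : Fin M, p.2 (i, s) * mwuGrad P p.2 (i, s)

/-- The MWU map as a function of the pair `(ε, x)`. -/
noncomputable def mwuPsi {N M : ℕ} (P : (Fin N × Fin M → ℝ) → ℝ)
    (p : ℝ × (Fin N × Fin M → ℝ)) : Fin N × Fin M → ℝ :=
  fun a => p.2 a * (1 + p.1 * mwuGrad P p.2 a) / mwuDen P p a.1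

theorem mwuMap_eq_psi {N M : ℕ} (P : (Fin N × Fin M → ℝ) → ℝ) (ε : ℝ)
    (x : Fin N × Fin M → ℝ) : mwuMap P ε x = mwuPsi P (ε, x) := rfl

theorem mwuPsi_zero {N M : ℕ} (P : (Fin N × Fin M → ℝ) → ℝ)
    (x : Fin N × Fin M → ℝ) : mwuPsi P (0, x) = x := by
  funext a
  simp [mwuPsi, mwuDen]

theorem simplexProd_convex (N M : ℕ) : Convex ℝ (simplexProd N M) := by
  intro x hx y hy a b ha hb hab
  refine ⟨fun c => ?_, fun i => ?_⟩
  · have := hx.1 c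
    have := hy.1 c
    simp only [Pi.add_apply, Pi.smul_apply, smul_eq_mul]
    nlinarith
  · simp only [Pi.add_apply, Pi.smul_apply, smul_eq_mul]
    rw [Finset.sum_add_distrib, ← Finset.mul_sum, ← Finset.mul_sum, hx.2 i, hy.2 i]
    simpa using hab

theorem simplexProd_isCompact (N M : ℕ) : IsCompact (simplexProd N M) := by
  have hclosed : IsClosed (simplexProd N M) := by
    have : simplexProd N M =
        (⋂ a, {x : Fin N × Fin M → ℝ | 0 ≤ x a}) ∩
          ⋂ i, {x : Fin N × Fin M → ℝ | ∑ j, x (i, j) = 1} := by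
      ext x; simp [simplexProd, Set.mem_iInter]
    rw [this]
    exact (isClosed_iInter fun a => isClosed_le continuous_const (continuous_apply a)).inter
      (isClosed_iInter fun i =>
        isClosed_eq (continuous_finset_sum _ fun j _ => continuous_apply (i, j)) continuous_const)
  have hsub : simplexProd N M ⊆ Set.Icc (0 : Fin N × Fin M → ℝ) 1 := by
    rintro x ⟨h0, h1⟩
    refine ⟨fun a => h0 a, fun a => ?_⟩
    obtain ⟨i, j⟩ := a
    calc x (i, j) ≤ ∑ s : Fin M, x (i, s) :=
          Finset.single_le_sum (fun s _ => h0 (i, s)) (Finset.mem_univ j)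
      _ = 1 := h1 i
  exact (isCompact_Icc).of_isClosed_subset hclosed hsub

theorem mwu_is_diffeomorphism (N M : ℕ)
    (P : (Fin N × Fin M → ℝ) → ℝ) (U : Set (Fin N × Fin M → ℝ))
    (hU : IsOpen U) (hDU : simplexProd N M ⊆ U)
    (hP : ContDiffOn ℝ 2 P U) :
    ∃ δ > (0 : ℝ), ∀ ε : ℝ, 0 < ε → ε < δ →
      Set.InjOn (mwuMap P ε) (simplexProd N M) ∧
      (∀ x ∈ simplexProd N M, DifferentiableAt ℝ (mwuMap P ε) x) ∧
      ∃ g : (Fin N × Fin M → ℝ) → (Fin N × Fin M → ℝ),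
        (∀ x ∈ simplexProd N M, g (mwuMap P ε x) = x) ∧
        ∀ y ∈ mwuMap P ε '' simplexProd N M,
          DifferentiableWithinAt ℝ g (mwuMap P ε '' simplexProd N M) y := by
  classical
  let E := (Fin N × Fin M → ℝ)
  set D := simplexProd N M with hDdef
  -- regularity of the gradient coordinates
  have hfd : ContDiffOn ℝ 1 (fderiv ℝ P) U := hP.fderiv_of_isOpen hU (m := 1) (by norm_num)
  have hdc : ∀ a : Fin N × Fin M, ContDiffOn ℝ 1 (fun x : E => mwuGrad P x a) U := by
    intro a
    exact (ContinuousLinearMap.apply ℝ ℝ ((Pi.single a 1 : E))).contDiff.comp_contDiffOn hfd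
  -- the open set V where everything is defined
  set V : Set (ℝ × E) :=
    {p | p.2 ∈ U} ∩ (mwuDen P) ⁻¹' {v : Fin N → ℝ | ∀ i, v i ≠ 0} with hVdef
  have hmemV_iff : ∀ p : ℝ × E, p ∈ V ↔ p.2 ∈ U ∧ ∀ i, mwuDen P p i ≠ 0 := by
    intro p
    simp [hVdef, Set.mem_inter_iff, Set.mem_preimage]
  have hSopen : IsOpen {p : ℝ × E | p.2 ∈ U} := hU.preimage continuous_snd
  have hdenC : ContinuousOn (mwuDen P) {p : ℝ × E | p.2 ∈ U} := by
    rw [continuousOn_pi]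
    intro i
    refine continuousOn_const.add (continuousOn_fst.mul (continuousOn_finset_sum _ fun s _ => ?_))
    refine ContinuousOn.mul ?_ ?_
    · exact ((continuous_apply (i, s)).comp continuous_snd).continuousOn
    · exact (hdc (i, s)).continuousOn.comp continuous_snd.continuousOn fun p hp => hp
  have hO2 : IsOpen {v : Fin N → ℝ | ∀ i, v i ≠ 0} := by
    have : {v : Fin N → ℝ | ∀ i, v i ≠ 0}
        = ⋂ i, (fun v : Fin N → ℝ => v i) ⁻¹' {t : ℝ | t ≠ 0} := by
      ext v; simp
    rw [this]
    exact isOpen_iInter_of_finite fun i => isOpen_ne.preimage (continuous_apply i)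
  have hVopen : IsOpen V := hdenC.isOpen_inter_preimage hSopen hO2
  -- smoothness of Ψ on V
  have hV2U : ∀ p : ℝ × E, p ∈ V → p.2 ∈ U := fun p hp => ((hmemV_iff p).1 hp).1
  have hΨC : ContDiffOn ℝ 1 (mwuPsi P) V := by
    rw [contDiffOn_pi]
    intro a
    have hcoord : ∀ b : Fin N × Fin M, ContDiffOn ℝ 1 (fun p : ℝ × E => p.2 b) V :=
      fun b => ((contDiff_pi.1 contDiff_id b).comp contDiff_snd).contDiffOn
    have hgrad : ∀ b : Fin N × Fin M, ContDiffOn ℝ 1 (fun p : ℝ × E => mwuGrad P p.2 b) V :=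
      fun b => (hdc b).comp contDiff_snd.contDiffOn hV2U
    have hnum : ContDiffOn ℝ 1 (fun p : ℝ × E => p.2 a * (1 + p.1 * mwuGrad P p.2 a)) V :=
      (hcoord a).mul (contDiffOn_const.add (contDiff_fst.contDiffOn.mul (hgrad a)))
    have hden : ContDiffOn ℝ 1 (fun p : ℝ × E => mwuDen P p a.1) V := by
      simp only [mwuDen]
      refine contDiffOn_const.add (contDiff_fst.contDiffOn.mul ?_)
      exact ContDiffOn.sum fun s _ => (hcoord (a.1, s)).mul (hgrad (a.1, s))
    simp only [mwuPsi]
    exact hnum.div hden fun p hp => ((hmemV_iff p).1 hp).2 a.1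
  have hΨdiff : ∀ p ∈ V, HasFDerivAt (mwuPsi P) (fderiv ℝ (mwuPsi P) p) p := fun p hp =>
    ((hΨC.differentiableOn one_ne_zero).differentiableAt (hVopen.mem_nhds hp)).hasFDerivAt
  set inrE : E →L[ℝ] ℝ × E := ContinuousLinearMap.inr ℝ ℝ E with hinrE
  set A : ℝ × E → E →L[ℝ] E := fun p => (fderiv ℝ (mwuPsi P) p).comp inrE with hAdef
  have hslice : ∀ (ε : ℝ) (x : E), (ε, x) ∈ V →
      HasFDerivAt (fun y : E => mwuPsi P (ε, y)) (A (ε, x)) x := by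
    intro ε x hp
    have h2 : HasFDerivAt (fun y : E => ((ε : ℝ), y)) inrE x := by
      have h := (hasFDerivAt_const ε x).prodMk (hasFDerivAt_id (𝕜 := ℝ) x)
      have heq : ((0 : E →L[ℝ] ℝ).prod (ContinuousLinearMap.id ℝ E)) = inrE := by
        ext v <;> simp [hinrE]
      rwa [heq] at h
    exact (hΨdiff _ hp).comp x h2
  have hV0 : ∀ x : E, x ∈ U → ((0 : ℝ), x) ∈ V := by
    intro x hx
    rw [hmemV_iff]
    exact ⟨hx, fun i => by simp [mwuDen]⟩
  have hA0 : ∀ x : E, x ∈ U → A (0, x) = ContinuousLinearMap.id ℝ E := by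
    intro x hx
    have h1 := hslice 0 x (hV0 x hx)
    have h2 : (fun y : E => mwuPsi P (0, y)) = fun y => y := by
      funext y; exact mwuPsi_zero P y
    rw [h2] at h1
    exact h1.unique (hasFDerivAt_id x)
  have hAcont : ContinuousOn A V :=
    ContinuousOn.clm_comp (hΨC.continuousOn_fderiv_of_isOpen hVopen le_rfl) continuousOn_const
  set W : Set (ℝ × E) :=
    V ∩ (fun p => ‖A p - ContinuousLinearMap.id ℝ E‖) ⁻¹' Set.Iio (1/2 : ℝ) with hWdef
  have hWopen : IsOpen W :=
    ContinuousOn.isOpen_inter_preimage ((hAcont.sub continuousOn_const).norm) hVopen isOpen_Iio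
  have hKW : ∀ x ∈ D, ((0 : ℝ), x) ∈ W := by
    intro x hx
    refine ⟨hV0 x (hDU hx), ?_⟩
    simp [Set.mem_preimage, hA0 x (hDU hx)]
  obtain ⟨δ, hδpos, hδ⟩ :=
    ((simplexProd_isCompact N M).image (Continuous.prodMk_right (0:ℝ))).exists_thickening_subset_open
      hWopen (by rintro _ ⟨x, hx, rfl⟩; exact hKW x hx)
  have hmemW : ∀ ε : ℝ, |ε| < δ → ∀ x ∈ D, (ε, x) ∈ W := by
    intro ε hε x hx
    apply hδ
    rw [Metric.mem_thickening_iff]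
    refine ⟨((0:ℝ), x), ⟨x, hx, rfl⟩, ?_⟩
    rw [Prod.dist_eq]
    simp only [dist_self, Real.dist_eq, sub_zero]
    exact max_lt hε hδpos
  refine ⟨δ, hδpos, fun ε hε0 hεδ => ?_⟩
  have hεW : ∀ x ∈ D, (ε, x) ∈ W := hmemW ε (by rwa [abs_of_pos hε0]) 
  set T := mwuMap P ε with hT
  have hBx : ∀ x ∈ D, HasFDerivAt T (A (ε, x)) x := fun x hx => hslice ε x (hεW x hx).1
  have hnorm : ∀ x ∈ D, ‖A (ε, x) - ContinuousLinearMap.id ℝ E‖ < 1/2 := fun x hx =>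
    Set.mem_Iio.mp (hεW x hx).2
  -- mean value estimate
  have hlip : ∀ x ∈ D, ∀ z ∈ D, ‖(T z - z) - (T x - x)‖ ≤ 1/2 * ‖z - x‖ := by
    intro x hx z hz
    exact (simplexProd_convex N M).norm_image_sub_le_of_norm_hasFDerivWithin_le
      (f := fun y => T y - y) (f' := fun y => A (ε, y) - ContinuousLinearMap.id ℝ E)
      (fun y hy => ((hBx y hy).sub (hasFDerivAt_id y)).hasFDerivWithinAt)
      (fun y hy => le_of_lt (hnorm y hy)) hx hz
  -- anti-Lipschitz estimate
  have hanti : ∀ x ∈ D, ∀ z ∈ D, ‖z - x‖ ≤ 2 * ‖T z - T x‖ := by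
    intro x hx z hz
    have h1 := hlip x hx z hz
    have h2 : ‖z - x‖ - ‖T z - T x‖ ≤ ‖(z - x) - (T z - T x)‖ := norm_sub_norm_le _ _
    have h3 : (z - x) - (T z - T x) = -((T z - z) - (T x - x)) := by abel
    rw [h3, norm_neg] at h2
    linarith
  have hinj : Set.InjOn T D := by
    intro x hx z hz hxz
    have := hanti x hx z hz
    rw [hxz, sub_self, norm_zero, mul_zero] at this
    have hz0 : z - x = 0 := norm_le_zero_iff.mp this
    exact (sub_eq_zero.mp hz0).symm ▸ rfl
  haveI : Nonempty E := ⟨0⟩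
  set g := Function.invFunOn T D with hg
  have hleft : ∀ x ∈ D, g (T x) = x := fun x hx => hinj.leftInvOn_invFunOn hx
  refine ⟨hinj, fun x hx => (hBx x hx).differentiableAt, g, hleft, ?_⟩
  rintro y ⟨x, hx, rfl⟩
  set B := A (ε, x) with hB
  have hBid : ‖(1 : E →L[ℝ] E) - B‖ < 1 := by
    have h1 : (1 : E →L[ℝ] E) = ContinuousLinearMap.id ℝ E := rfl
    rw [h1, norm_sub_rev]
    exact lt_trans (hnorm x hx) (by norm_num)
  set u : (E →L[ℝ] E)ˣ := Units.oneSub ((1 : E →L[ℝ] E) - B) hBid with hu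
  have huval : (↑u : E →L[ℝ] E) = B := by
    rw [hu, Units.val_oneSub, sub_sub_cancel]
  set C := ((↑(u⁻¹) : E →L[ℝ] E)) with hC
  have hCB : ∀ v : E, C (B v) = v := by
    intro v
    calc C (B v) = ((↑(u⁻¹) * ↑u : E →L[ℝ] E)) v := by
          rw [ContinuousLinearMap.mul_apply, huval]
      _ = v := by rw [u.inv_mul, ContinuousLinearMap.one_apply]
  have hmain : HasFDerivWithinAt g C (T '' D) (T x) := by
    refine HasFDerivWithinAt.of_isLittleO ?_
    rw [Asymptotics.isLittleO_iff]
    intro c hc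
    set K := ‖C‖ with hK
    have hK0 : (0:ℝ) ≤ K := norm_nonneg _
    have hK1 : (0:ℝ) < K + 1 := by linarith
    set c' := c / (2 * (K + 1)) with hc'
    have hc'0 : 0 < c' := by positivity
    have hev := Asymptotics.isLittleO_iff.mp (hBx x hx).isLittleO hc'0
    rw [Metric.eventually_nhds_iff] at hev
    obtain ⟨r, hr0, hr⟩ := hev
    rw [Filter.eventually_iff, mem_nhdsWithin]
    refine ⟨Metric.ball (T x) (r / 2), Metric.isOpen_ball,
      Metric.mem_ball_self (by linarith), ?_⟩
    rintro y' ⟨hball, z, hzD, rfl⟩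
    have hgz : g (T z) = z := hleft z hzD
    have hgx : g (T x) = x := hleft x hx
    have hzx : ‖z - x‖ ≤ 2 * ‖T z - T x‖ := hanti x hx z hzD
    have hdist : ‖T z - T x‖ < r / 2 := by
      rw [Metric.mem_ball, dist_eq_norm] at hball
      exact hball
    have hzxr : dist z x < r := by
      rw [dist_eq_norm]
      calc ‖z - x‖ ≤ 2 * ‖T z - T x‖ := hzx
        _ < 2 * (r / 2) := by linarith
        _ = r := by ring
    have hest : ‖T z - T x - B (z - x)‖ ≤ c' * ‖z - x‖ := hr hzxr
    show ‖g (T z) - g (T x) - C (T z - T x)‖ ≤ c * ‖T z - T x‖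
    rw [hgz, hgx]
    have key : z - x - C (T z - T x) = C (B (z - x) - (T z - T x)) := by
      simp only [map_sub, hCB]
    rw [key]
    calc ‖C (B (z - x) - (T z - T x))‖ ≤ K * ‖B (z - x) - (T z - T x)‖ := C.le_opNorm _
      _ = K * ‖T z - T x - B (z - x)‖ := by rw [norm_sub_rev]
      _ ≤ K * (c' * ‖z - x‖) := mul_le_mul_of_nonneg_left hest hK0
      _ ≤ K * (c' * (2 * ‖T z - T x‖)) :=
          mul_le_mul_of_nonneg_left (mul_le_mul_of_nonneg_left hzx hc'0.le) hK0
      _ ≤ c * ‖T z - T x‖ := by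
          have e : K * (c / (2 * (K + 1)) * (2 * ‖T z - T x‖))
              = (c * ‖T z - T x‖) * (K / (K + 1)) := by
            field_simp
          rw [hc', e]
          have hle1 : K / (K + 1) ≤ 1 := by
            rw [div_le_one hK1]; linarith
          exact mul_le_of_le_one_right (mul_nonneg hc.le (norm_nonneg _)) hle1
  exact hmain.differentiableWithinAt
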